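/- Let P° be the concentric distribution centered at a j-subset v, assigning to each j-subset in the ring R_r(v) the weight w_r / (C(j,j-r)·C(n-j,r)), where the w_r are nonnegative and sum to 1. Then for every k-subset C with |C ∩ v| = j - m, the approval proportion satisfies π_{P°}(C) = Σ_{r=m}^{D} w_r · [C(j-m, j-r)·C(k+m-j, r)] / [C(j, r)·C(n-j, r)], where D = min(j, n-j). In particular π_{P°}(C) depends only on m. -/

import Mathlib

open Finset


lemma count_fiber {α : Type*} [DecidableEq α] (C v : Finset α) (j s : ℕ) (hs : s ≤ j) :
    ((C.powersetCard j).filter (fun ℓ => (v ∩ ℓ).card = s)).card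
      = (C ∩ v).card.choose s * (C \ v).card.choose (j - s) := by
  rw [← card_powersetCard, ← card_powersetCard, ← card_product]
  apply Finset.card_bij' (fun ℓ _ => (ℓ ∩ v, ℓ \ v)) (fun p _ => p.1 ∪ p.2)
  · intro ℓ hℓ
    simp only [mem_filter, mem_powersetCard] at hℓ
    obtain ⟨⟨hsub, hcard⟩, hint⟩ := hℓ
    have h1 : (ℓ ∩ v).card + (ℓ \ v).card = ℓ.card := card_inter_add_card_sdiff ℓ v
    have hic : (ℓ ∩ v).card = s := by rw [inter_comm] at hint; exact hint
    simp only [mem_product, mem_powersetCard]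
    refine ⟨⟨?_, hic⟩, ⟨?_, by omega⟩⟩
    · exact fun a ha => by
        simp only [mem_inter] at ha ⊢; exact ⟨hsub ha.1, ha.2⟩
    · exact fun a ha => by
        simp only [mem_sdiff] at ha ⊢; exact ⟨hsub ha.1, ha.2⟩
  · intro p hp
    simp only [mem_product, mem_powersetCard] at hp
    obtain ⟨⟨h1s, h1c⟩, ⟨h2s, h2c⟩⟩ := hp
    have h1v : p.1 ⊆ v := h1s.trans inter_subset_right
    have h2v : ∀ a ∈ p.2, a ∉ v := fun a ha => (mem_sdiff.mp (h2s ha)).2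
    have hdisj : Disjoint p.1 p.2 :=
      disjoint_left.mpr (fun a ha hb => h2v a hb (h1v ha))
    simp only [mem_filter, mem_powersetCard]
    refine ⟨⟨union_subset (h1s.trans inter_subset_left) (h2s.trans sdiff_subset), ?_⟩, ?_⟩
    · rw [card_union_of_disjoint hdisj, h1c, h2c]; omega
    · have : v ∩ (p.1 ∪ p.2) = p.1 := by
        ext a
        simp only [mem_inter, mem_union]
        constructor
        · rintro ⟨hav, h1 | h2⟩
          · exact h1
          · exact absurd hav (h2v a h2)
        · intro h; exact ⟨h1v h, Or.inl h⟩
      rw [this, h1c]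
  · intro ℓ hℓ
    ext a
    simp only [mem_union, mem_inter, mem_sdiff]
    tauto
  · intro p hp
    simp only [mem_product, mem_powersetCard] at hp
    obtain ⟨⟨h1s, h1c⟩, ⟨h2s, h2c⟩⟩ := hp
    have h1v : p.1 ⊆ v := h1s.trans inter_subset_right
    have h2v : ∀ a ∈ p.2, a ∉ v := fun a ha => (mem_sdiff.mp (h2s ha)).2
    have e1 : (p.1 ∪ p.2) ∩ v = p.1 := by
      ext a
      simp only [mem_inter, mem_union]
      constructor
      · rintro ⟨h1 | h2, hav⟩
        · exact h1
        · exact absurd hav (h2v a h2)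
      · intro h; exact ⟨Or.inl h, h1v h⟩
    have e2 : (p.1 ∪ p.2) \ v = p.2 := by
      ext a
      simp only [mem_sdiff, mem_union]
      constructor
      · rintro ⟨h1 | h2, hav⟩
        · exact absurd (h1v h1) hav
        · exact h2
      · intro h; exact ⟨Or.inr h, h2v a h⟩
    rw [e1, e2]

theorem concentric_approval (n j k m : ℕ) (hjk : j ≤ k) (hkn : k ≤ n)
    (hmj : m ≤ j) (hmk : m ≤ n - k)
    (v : Finset (Fin n)) (hv : v.card = j)
    (w : ℕ → ℝ) (hw0 : ∀ r, 0 ≤ w r)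
    (hw1 : ∑ r ∈ range (min j (n - j) + 1), w r = 1)
    -- the concentric distribution centered at `v` with ring weights `w`
    (Pc : Finset (Fin n) → ℝ)
    (hPc : ∀ ℓ : Finset (Fin n), ℓ.card = j →
      Pc ℓ = w (j - (v ∩ ℓ).card)
        / ((j.choose ((v ∩ ℓ).card) * (n - j).choose (j - (v ∩ ℓ).card) : ℕ) : ℝ))
    (C : Finset (Fin n)) (hC : C.card = k) (hCv : (C ∩ v).card = j - m) :
    ∑ ℓ ∈ C.powersetCard j, Pc ℓ
      = ∑ r ∈ Icc m (min j (n - j)),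
          w r * (((j - m).choose (j - r) * (k + m - j).choose r : ℕ) : ℝ)
            / ((j.choose r * (n - j).choose r : ℕ) : ℝ) := by
  have hCd : (C \ v).card = k + m - j := by
    have := card_inter_add_card_sdiff C v
    omega
  -- basic facts about any ℓ in the powerset
  have key : ∀ ℓ ∈ C.powersetCard j, m ≤ j - (v ∩ ℓ).card ∧ j - (v ∩ ℓ).card ≤ min j (n - j) := by
    intro ℓ hℓ
    rw [mem_powersetCard] at hℓ
    obtain ⟨hsub, hcard⟩ := hℓ
    have h1 : (v ∩ ℓ).card ≤ (C ∩ v).card := by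
      apply card_le_card
      intro a ha
      rw [mem_inter] at ha ⊢
      exact ⟨hsub ha.2, ha.1⟩
    have h2 : (ℓ ∩ v).card + (ℓ \ v).card = ℓ.card := card_inter_add_card_sdiff ℓ v
    have h3 : (ℓ \ v).card ≤ (C \ v).card := by
      apply card_le_card
      intro a ha
      rw [mem_sdiff] at ha ⊢
      exact ⟨hsub ha.1, ha.2⟩
    have h4 : (ℓ ∩ v).card = (v ∩ ℓ).card := by rw [inter_comm]
    omega
  rw [← Finset.sum_fiberwise_of_maps_to (g := fun ℓ => j - (v ∩ ℓ).card)
    (fun ℓ hℓ => by rw [mem_Icc]; exact key ℓ hℓ)]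
  apply Finset.sum_congr rfl
  intro r hr
  rw [mem_Icc] at hr
  -- rewrite the fiber condition
  have hfe : (C.powersetCard j).filter (fun ℓ => j - (v ∩ ℓ).card = r)
      = (C.powersetCard j).filter (fun ℓ => (v ∩ ℓ).card = j - r) := by
    apply filter_congr
    intro ℓ hℓ
    rw [mem_powersetCard] at hℓ
    have : (v ∩ ℓ).card ≤ j := by
      rw [← hℓ.2]
      exact card_le_card inter_subset_right
    omega
  rw [hfe]
  have hsum : ∀ ℓ ∈ (C.powersetCard j).filter (fun ℓ => (v ∩ ℓ).card = j - r),
      Pc ℓ = w r / ((j.choose r * (n - j).choose r : ℕ) : ℝ) := by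
    intro ℓ hℓ
    rw [mem_filter, mem_powersetCard] at hℓ
    rw [hPc ℓ hℓ.1.2, hℓ.2]
    have h1 : j - (j - r) = r := by omega
    have h2 : j.choose (j - r) = j.choose r := Nat.choose_symm (by omega)
    rw [h1, h2]
  rw [Finset.sum_congr rfl hsum, Finset.sum_const,
    count_fiber C v j (j - r) (by omega), hCv, hCd]
  have h3 : j - (j - r) = r := by omega
  rw [h3, nsmul_eq_mul]
  push_cast
  ring
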